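/- arXiv:1808.06163 — 6 statements merged into one kernel-verified Lean document; each statement's English description precedes it below -/
import Mathlib

section
/- Let e : ℕ → ℝ satisfy e(0) = 0, e(1) = 1, and e(n) = (2/(n-1))·Σ_{k=0}^{n-2} e(k) for all n ≥ 2. Then for every n ≥ 0, e(n) = Σ_{k=0}^{n} (n−k)·(−2)^k / k!. -/
noncomputable def gAux (n : ℕ) : ℝ := ∑ k ∈ Finset.range n, (-2 : ℝ) ^ k / (Nat.factorial k)

noncomputable def fAux (n : ℕ) : ℝ :=
  ∑ k ∈ Finset.range (n + 1), ((n : ℝ) - (k : ℝ)) * (-2 : ℝ) ^ k / (Nat.factorial k)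

lemma fAux_eq (n : ℕ) : fAux n = (n : ℝ) * gAux (n + 1) + 2 * gAux n := by
  have key : ∑ k ∈ Finset.range (n + 1), (k : ℝ) * (-2) ^ k / (Nat.factorial k)
      = -2 * ∑ k ∈ Finset.range n, (-2 : ℝ) ^ k / (Nat.factorial k) := by
    rw [Finset.sum_range_succ']
    simp only [Nat.cast_zero, zero_mul, zero_div, add_zero, Finset.mul_sum]
    apply Finset.sum_congr rfl
    intro j _
    have hfact : (Nat.factorial (j + 1) : ℝ) = ((j : ℝ) + 1) * (Nat.factorial j) := by
      push_cast [Nat.factorial_succ]; ring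
    have hj : ((j : ℝ) + 1) ≠ 0 := by positivity
    have hf : (Nat.factorial j : ℝ) ≠ 0 := by
      exact_mod_cast Nat.factorial_ne_zero j
    rw [hfact]
    push_cast
    field_simp
    ring
  unfold fAux gAux
  have hsplit : ∀ k : ℕ, ((n : ℝ) - (k : ℝ)) * (-2 : ℝ) ^ k / (Nat.factorial k)
      = (n : ℝ) * ((-2 : ℝ) ^ k / (Nat.factorial k)) - (k : ℝ) * (-2) ^ k / (Nat.factorial k) := by
    intro k; ring
  simp_rw [hsplit]
  rw [Finset.sum_sub_distrib, ← Finset.mul_sum, key]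
  ring

lemma fAux_succ (n : ℕ) : fAux (n + 1) = fAux n + gAux (n + 1) := by
  unfold fAux gAux
  rw [Finset.sum_range_succ]
  simp only [Nat.cast_add, Nat.cast_one, sub_self, zero_mul, zero_div, add_zero]
  rw [← Finset.sum_add_distrib]
  apply Finset.sum_congr rfl
  intro k _
  ring

lemma fAux_P (n : ℕ) : ((n : ℝ) + 1) * fAux (n + 2) = (n : ℝ) * fAux (n + 1) + 2 * fAux n := by
  have b1 := fAux_eq (n + 1)
  have e2 := fAux_succ (n + 1)
  have e1 := fAux_succ n
  push_cast at b1
  linear_combination ((n : ℝ) + 1) * e2 + 2 * e1 - b1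

lemma fAux_L (n : ℕ) : ((n : ℝ) + 1) * fAux (n + 2) = 2 * ∑ k ∈ Finset.range (n + 1), fAux k := by
  induction n with
  | zero =>
    have h2 : fAux 2 = 0 := by
      unfold fAux
      norm_num [Finset.sum_range_succ, Nat.factorial]
    have h0 : fAux 0 = 0 := by
      unfold fAux
      norm_num [Finset.sum_range_succ]
    simp [h2, h0]
  | succ m ih =>
    have p := fAux_P (m + 1)
    rw [Finset.sum_range_succ]
    push_cast at p ⊢
    linear_combination p + ih

theorem stmt_1 (e : ℕ → ℝ) (h0 : e 0 = 0) (h1 : e 1 = 1)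
    (hrec : ∀ n : ℕ, 2 ≤ n →
      e n = (2 / ((n : ℝ) - 1)) * ∑ k ∈ Finset.range (n - 1), e k) :
    ∀ n : ℕ, e n = ∑ k ∈ Finset.range (n + 1),
      ((n : ℝ) - (k : ℝ)) * (-2 : ℝ) ^ k / (Nat.factorial k) := by
  intro n
  induction n using Nat.strong_induction_on with
  | _ n ih =>
    match n with
    | 0 =>
      show e 0 = fAux 0
      rw [h0]
      unfold fAux
      norm_num [Finset.sum_range_succ]
    | 1 =>
      show e 1 = fAux 1
      rw [h1]
      unfold fAux
      norm_num [Finset.sum_range_succ, Nat.factorial]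
    | (n + 2) =>
      show e (n + 2) = fAux (n + 2)
      rw [hrec (n + 2) (by omega)]
      have hsum : ∑ k ∈ Finset.range (n + 2 - 1), e k = ∑ k ∈ Finset.range (n + 1), fAux k := by
        apply Finset.sum_congr rfl
        intro k hk
        simp only [Finset.mem_range] at hk
        exact ih k (by omega)
      rw [hsum]
      have hL := fAux_L n
      have hne : ((n : ℝ) + 1) ≠ 0 := by positivity
      push_cast
      rw [show ((n : ℝ) + 2 - 1) = (n : ℝ) + 1 by ring]
      field_simp
      linarith [hL]
end

section
/- Let e : ℕ → ℝ satisfy e(0) = 0, e(1) = 1, and e(n) = (2/(n-1))·Σ_{k=0}^{n-2} e(k) for all n ≥ 2. Then e(n)/n converges to e^{−2} as n → ∞. -/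
open Finset Filter

private noncomputable def gg (n : ℕ) : ℝ := ∑ k ∈ range (n + 1), (-2 : ℝ) ^ k / k.factorial

private noncomputable def FF (n : ℕ) : ℝ := ∑ m ∈ range n, gg m

private lemma gg_succ (n : ℕ) :
    gg (n + 1) = gg n + (-2 : ℝ) ^ (n + 1) / (n + 1).factorial := by
  simp [gg, Finset.sum_range_succ]

private lemma Qlem : ∀ n : ℕ, 2 ≤ n → (n : ℝ) * gg n + FF n = 2 * FF (n - 1) := by
  intro n hn
  induction n, hn using Nat.le_induction with
  | base =>
    norm_num [gg, FF, Finset.sum_range_succ]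
  | succ n hn ih =>
    have h1 : n - 1 + 1 = n := by omega
    have hFn : FF n = FF (n - 1) + gg (n - 1) := by
      conv_lhs => rw [← h1]
      simp [FF, Finset.sum_range_succ]
    have hFsn : FF (n + 1) = FF n + gg n := by simp [FF, Finset.sum_range_succ]
    have hg1 : gg n = gg (n - 1) + (-2 : ℝ) ^ n / n.factorial := by
      conv_lhs => rw [← h1]
      rw [gg_succ, h1]
    have hg2 : gg (n + 1) = gg n + (-2 : ℝ) ^ (n + 1) / (n + 1).factorial := gg_succ n
    have hfac : ((n + 1).factorial : ℝ) = (n + 1) * n.factorial := by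
      rw [Nat.factorial_succ]; push_cast; ring
    have hne : (n.factorial : ℝ) ≠ 0 := Nat.cast_ne_zero.mpr n.factorial_ne_zero
    have hne1 : ((n : ℝ) + 1) ≠ 0 := by positivity
    have key : ((n : ℝ) + 1) * ((-2 : ℝ) ^ (n + 1) / (n + 1).factorial)
        + 2 * ((-2 : ℝ) ^ n / n.factorial) = 0 := by
      rw [hfac, pow_succ]
      field_simp
      ring
    simp only [Nat.add_sub_cancel, hFsn, hg2]
    rw [hFn, hg1] at ih ⊢
    push_cast
    linear_combination ih + key

private lemma Plem : ∀ n : ℕ, 2 ≤ n →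
    ((n : ℝ) - 1) * FF n = 2 * ∑ k ∈ range (n - 1), FF k := by
  intro n hn
  induction n, hn using Nat.le_induction with
  | base =>
    norm_num [gg, FF, Finset.sum_range_succ]
  | succ n hn ih =>
    have h1 : n - 1 + 1 = n := by omega
    have hQ := Qlem n hn
    have hFsn : FF (n + 1) = FF n + gg n := by simp [FF, Finset.sum_range_succ]
    have hsum : ∑ k ∈ range (n + 1 - 1), FF k
        = (∑ k ∈ range (n - 1), FF k) + FF (n - 1) := by
      simp only [Nat.add_sub_cancel]
      conv_lhs => rw [← h1]
      rw [Finset.sum_range_succ]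
    rw [hsum, hFsn]
    push_cast
    linarith [ih, hQ]

theorem stmt_2 (e : ℕ → ℝ) (h0 : e 0 = 0) (h1 : e 1 = 1)
    (hrec : ∀ n : ℕ, 2 ≤ n →
      e n = (2 / ((n : ℝ) - 1)) * ∑ k ∈ Finset.range (n - 1), e k) :
    Filter.Tendsto (fun n : ℕ => e n / (n : ℝ)) Filter.atTop
      (nhds (Real.exp (-2))) := by
  have heF : ∀ n, e n = FF n := by
    intro n
    induction n using Nat.strong_induction_on with
    | _ n ih =>
      match n, ih with
      | 0, _ => simpa [FF] using h0
      | 1, _ => simp [FF, gg, h1]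
      | (m + 2), ih =>
        set n := m + 2 with hn
        have hn2 : 2 ≤ n := by omega
        have hne : ((n : ℝ) - 1) ≠ 0 := by
          have : (2 : ℝ) ≤ (n : ℝ) := by exact_mod_cast hn2
          linarith
        have : e n = (2 / ((n : ℝ) - 1)) * ∑ k ∈ Finset.range (n - 1), FF k := by
          rw [hrec n hn2]
          congr 1
          exact Finset.sum_congr rfl fun k hk => ih k (by
            have := Finset.mem_range.mp hk; omega)
        rw [this]
        have hP : ((n : ℝ) - 1) * FF n = 2 * ∑ k ∈ range (m + 1), FF k := Plem n hn2
        field_simp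
        rw [show n - 1 = m + 1 by omega]
        linear_combination -hP
  have hgg : Tendsto gg atTop (nhds (Real.exp (-2))) := by
    have : Tendsto (fun n => ∑ k ∈ range n, (-2 : ℝ) ^ k / k.factorial) atTop
        (nhds (Real.exp (-2))) := by
      apply HasSum.tendsto_sum_nat
      rw [Real.exp_eq_exp_ℝ]
      exact NormedSpace.expSeries_div_hasSum_exp (-2 : ℝ)
    have := this.comp (tendsto_add_atTop_nat 1)
    exact this
  have hces := hgg.cesaro
  refine hces.congr (fun n => ?_)
  rw [heF n]
  simp [FF, div_eq_inv_mul]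
end

section
/- Let e : ℕ → ℝ satisfy e(0) = 0, e(1) = 1, and e(n) = (2/(n-1))·Σ_{k=0}^{n-2} e(k) for all n ≥ 2. Then for every real x with |x| < 1, the series Σ_{n=0}^{∞} e(n)·x^n converges and its sum equals x·e^{−2x}/(1−x)^2. -/
open Finset

/-- coefficient of the exponential series at -2 -/
noncomputable def cc : ℕ → ℝ := fun n => (-2 : ℝ) ^ n / n.factorial

noncomputable def PP : ℕ → ℝ := fun n => ∑ m ∈ range (n + 1), cc m

noncomputable def aa : ℕ → ℝ := fun n => ∑ k ∈ range n, PP k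

lemma hc (n : ℕ) : ((n : ℝ) + 1) * cc (n + 1) = -2 * cc n := by
  have h1 : (n.factorial : ℝ) ≠ 0 := Nat.cast_ne_zero.mpr n.factorial_ne_zero
  have h2 : ((n : ℝ) + 1) ≠ 0 := by positivity
  simp only [cc, Nat.factorial_succ, pow_succ, Nat.cast_mul, Nat.cast_add, Nat.cast_one]
  field_simp

lemma hP (n : ℕ) : PP (n + 1) = PP n + cc (n + 1) := by
  simp [PP, Finset.sum_range_succ]

lemma ha (n : ℕ) : aa (n + 1) = aa n + PP n := by
  simp [aa, Finset.sum_range_succ]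

lemma key (n : ℕ) : ((n : ℝ) + 1) * PP (n + 1) + PP n = aa n := by
  induction n with
  | zero =>
    simp [PP, aa, cc, Finset.sum_range_succ]
    norm_num
  | succ n ih =>
    have h1 := hP (n + 1)
    have h2 := hP n
    have h3 := hc (n + 1)
    have h4 := ha n
    push_cast at h3 ⊢
    nlinarith [h1, h2, h3, h4, ih]

lemma arec (m : ℕ) : ((m : ℝ) + 1) * aa (m + 2) = 2 * ∑ k ∈ range (m + 1), aa k := by
  induction m with
  | zero =>
    have h2 : aa 2 = 0 := by
      simp [aa, PP, cc, Finset.sum_range_succ]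
      norm_num
    have h0' : aa 0 = 0 := by simp [aa]
    norm_num [h2, h0']
  | succ m ih =>
    have h1 := ha (m + 2)
    have h2 := ha (m + 1)
    have h3 := key (m + 1)
    have hs : ∑ k ∈ range (m + 2), aa k = (∑ k ∈ range (m + 1), aa k) + aa (m + 1) :=
      Finset.sum_range_succ _ _
    push_cast at h3 ⊢
    rw [hs]
    nlinarith [h1, h2, h3, ih]

lemma aa_eq (n : ℕ) : aa n = ∑ m ∈ range (n + 1), ((n : ℝ) - m) * cc m := by
  induction n with
  | zero => simp [aa]
  | succ n ih =>
    rw [ha, ih]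
    symm
    rw [Finset.sum_range_succ]
    simp only [sub_self, zero_mul, add_zero]
    rw [Finset.sum_congr rfl (fun m (_ : m ∈ range (n + 1)) =>
      show (((n + 1 : ℕ) : ℝ) - m) * cc m = ((n : ℝ) - m) * cc m + cc m by push_cast; ring)]
    rw [Finset.sum_add_distrib]
    simp [PP]

theorem stmt_4 (e : ℕ → ℝ) (h0 : e 0 = 0) (h1 : e 1 = 1)
    (hrec : ∀ n : ℕ, 2 ≤ n →
      e n = (2 / ((n : ℝ) - 1)) * ∑ k ∈ Finset.range (n - 1), e k)
    (x : ℝ) (hx : |x| < 1) :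
    HasSum (fun n : ℕ => e n * x ^ n)
      (x * Real.exp (-2 * x) / (1 - x) ^ 2) := by
  -- step 1: e = aa
  have hea : ∀ n, e n = aa n := by
    intro n
    induction n using Nat.strong_induction_on with
    | _ n ih =>
      match n, ih with
      | 0, _ => simpa [aa] using h0
      | 1, _ => simp [aa, PP, cc]; exact h1
      | (m + 2), ih =>
        have hr := hrec (m + 2) (by omega)
        have hsum : ∑ k ∈ Finset.range (m + 2 - 1), e k
            = ∑ k ∈ Finset.range (m + 1), aa k := by
          apply Finset.sum_congr rfl
          intro k hk
          exact ih k (by simp at hk; omega)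
        rw [hr, hsum]
        have h2 := arec m
        have hne : ((m : ℝ) + 2) - 1 ≠ 0 := by
          have : (0 : ℝ) ≤ (m : ℝ) := Nat.cast_nonneg m
          intro h; linarith
        push_cast
        rw [div_mul_eq_mul_div, div_eq_iff hne]
        push_cast at h2
        linear_combination -h2
  -- step 2: the analytic identity
  have hf : HasSum (fun n : ℕ => (-2 * x) ^ n / n.factorial)
      (Real.exp (-2 * x)) := by
    rw [Real.exp_eq_exp_ℝ]
    exact NormedSpace.expSeries_div_hasSum_exp (-2 * x)
  have hg : HasSum (fun n : ℕ => (n : ℝ) * x ^ n) (x / (1 - x) ^ 2) := by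
    have := hasSum_coe_mul_geometric_of_norm_lt_one (𝕜 := ℝ) (r := x) (by simpa using hx)
    exact this
  have hfn : Summable fun n : ℕ => ‖(-2 * x) ^ n / (n.factorial : ℝ)‖ := by
    have := Real.summable_pow_div_factorial (2 * |x|)
    apply this.congr
    intro n
    rw [norm_div, norm_pow, Real.norm_eq_abs, Real.norm_eq_abs]
    simp [abs_mul, Nat.abs_cast]
  have hgn : Summable fun n : ℕ => ‖(n : ℝ) * x ^ n‖ := by
    have := summable_pow_mul_geometric_of_norm_lt_one (R := ℝ) (k := 1) (r := |x|)
      (by simpa using hx)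
    apply Summable.congr (this.mul_left 1)
    intro n
    rw [norm_mul, norm_pow]
    simp [Real.norm_eq_abs, abs_abs, Nat.abs_cast]
  have hcauchy := hasSum_sum_range_mul_of_summable_norm hfn hgn
  rw [hf.tsum_eq, hg.tsum_eq] at hcauchy
  have heq : ∀ n : ℕ, (∑ k ∈ range (n + 1),
      ((-2 * x) ^ k / k.factorial) * (((n - k : ℕ) : ℝ) * x ^ (n - k)))
      = e n * x ^ n := by
    intro n
    rw [hea, aa_eq, Finset.sum_mul]
    apply Finset.sum_congr rfl
    intro k hk
    have hk' : k ≤ n := by simpa [Nat.lt_succ_iff] using hk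
    have hcast : ((n - k : ℕ) : ℝ) = (n : ℝ) - k := by
      push_cast [Nat.cast_sub hk']; ring
    have hpow : x ^ k * x ^ (n - k) = x ^ n := by
      rw [← pow_add]
      congr 1
      omega
    rw [hcast]
    have : (-2 * x) ^ k = (-2 : ℝ) ^ k * x ^ k := by rw [mul_pow]
    rw [this]
    simp only [cc]
    rw [← hpow]
    ring
  have hval : x * Real.exp (-2 * x) / (1 - x) ^ 2
      = Real.exp (-2 * x) * (x / (1 - x) ^ 2) := by ring
  rw [hval]
  exact (funext heq) ▸ hcauchy
end

section
/- Let e : ℕ → ℝ satisfy e(0) = 0 and (n+1)·e(n+2) − n·e(n+1) = 2·e(n) for all n ≥ 0, and let A = Σ_{n=0}^{∞} e(n)·X^n be the associated formal power series in ℝ[[X]]. Then A satisfies the formal differential equation (X − X^2)·A′ = (2X^2 + 1 − X)·A, where A′ denotes the formal derivative of A. -/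
open PowerSeries

theorem stmt_5 (e : ℕ → ℝ) (h0 : e 0 = 0)
    (hrec : ∀ n : ℕ, ((n : ℝ) + 1) * e (n + 2) - (n : ℝ) * e (n + 1) = 2 * e n)
    (A : PowerSeries ℝ) (hA : A = PowerSeries.mk e) :
    (PowerSeries.X - PowerSeries.X ^ 2) * (PowerSeries.derivative ℝ A) =
      (2 * PowerSeries.X ^ 2 + 1 - PowerSeries.X) * A := by
  subst hA
  have hL : (PowerSeries.X - PowerSeries.X ^ 2) * (PowerSeries.derivative ℝ (mk e))
      = X ^ 1 * (derivative ℝ (mk e)) - X ^ 2 * (derivative ℝ (mk e)) := by ring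
  have hR : (2 * PowerSeries.X ^ 2 + 1 - PowerSeries.X) * (mk e)
      = X ^ 2 * (C (2:ℝ) * mk e) + mk e - X ^ 1 * mk e := by
    have h2 : (C (2:ℝ) : ℝ⟦X⟧) = 2 := by rw [show (2:ℝ) = 1 + 1 by norm_num, map_add, map_one]; norm_num
    rw [h2]; ring
  rw [hL, hR]
  ext n
  simp only [map_sub, map_add, coeff_X_pow_mul', coeff_C_mul,
    coeff_derivative, coeff_mk]
  rcases n with _ | _ | n
  · norm_num [h0]
  · norm_num [h0]
  · have := hrec n
    have h1 : n + 1 + 1 - 1 = n + 1 := rfl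
    have hle2 : 2 ≤ n + 1 + 1 := by omega
    have h2' : n + 1 + 1 - 2 = n := rfl
    simp only [if_pos (by omega : 1 ≤ n + 1 + 1), if_pos hle2, h1, h2',
      coeff_derivative, coeff_mk]
    push_cast
    nlinarith [hrec n]
end

section
/- Let e : ℕ → ℝ satisfy e(0) = 0, e(1) = 1, and e(n) = (2/(n-1))·Σ_{k=0}^{n-2} e(k) for all n ≥ 2. Then in the ring of formal power series ℝ[[X]] one has the identity (1 − X)^2 · (Σ_{n=0}^{∞} e(n)·X^n) = X · Σ_{n=0}^{∞} ((−2)^n / n!)·X^n; equivalently, the generating function of e equals X·exp(−2X)/(1−X)^2. -/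
theorem stmt_6 (e : ℕ → ℝ) (h0 : e 0 = 0) (h1 : e 1 = 1)
    (hrec : ∀ n : ℕ, 2 ≤ n →
      e n = (2 / ((n : ℝ) - 1)) * ∑ k ∈ Finset.range (n - 1), e k) :
    (1 - PowerSeries.X : PowerSeries ℝ) ^ 2 * PowerSeries.mk e =
      PowerSeries.X *
        PowerSeries.mk (fun n : ℕ => (-2 : ℝ) ^ n / (Nat.factorial n)) := by
  have hR : ∀ m : ℕ, ((m : ℝ) + 1) * e (m + 2) = (m : ℝ) * e (m + 1) + 2 * e m := by
    intro m
    have h2 := hrec (m + 2) (by omega)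
    have hsum2 : ((m : ℝ) + 1) * e (m + 2) = 2 * ∑ k ∈ Finset.range (m + 1), e k := by
      rw [h2]
      have : ((m + 2 : ℕ) : ℝ) - 1 = (m : ℝ) + 1 := by push_cast; ring
      rw [this]
      have hne : ((m : ℝ) + 1) ≠ 0 := by positivity
      rw [show m + 2 - 1 = m + 1 from rfl]
      field_simp
    rcases Nat.eq_zero_or_pos m with hm | hm
    · subst hm
      simp at hsum2 ⊢
      exact hsum2
    · have h1' := hrec (m + 1) (by omega)
      have hsum1 : (m : ℝ) * e (m + 1) = 2 * ∑ k ∈ Finset.range m, e k := by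
        rw [h1']
        have : ((m + 1 : ℕ) : ℝ) - 1 = (m : ℝ) := by push_cast; ring
        rw [this, show m + 1 - 1 = m from rfl]
        have hne : (m : ℝ) ≠ 0 := Nat.cast_ne_zero.mpr (by omega)
        field_simp
      rw [hsum2, hsum1, Finset.sum_range_succ]
      ring
  have key : ∀ n : ℕ, e (n + 2) - 2 * e (n + 1) + e n
      = (-2 : ℝ) ^ (n + 1) / Nat.factorial (n + 1) := by
    intro n
    induction n with
    | zero =>
      have := hR 0
      simp [h0] at this
      simp [this, h0, h1]
    | succ n ih =>
      have r1 := hR (n + 1)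
      have r0 := hR n
      push_cast at r1
      have hne : ((n : ℝ) + 2) ≠ 0 := by positivity
      have hmain : ((n : ℝ) + 2) * (e (n + 3) - 2 * e (n + 2) + e (n + 1))
          = -2 * (e (n + 2) - 2 * e (n + 1) + e n) := by
        have h3 : n + 1 + 2 = n + 3 := rfl
        rw [h3] at r1
        nlinarith [r1, r0]
      have hstep : e (n + 3) - 2 * e (n + 2) + e (n + 1)
          = (-2 * ((-2 : ℝ) ^ (n + 1) / Nat.factorial (n + 1))) / ((n : ℝ) + 2) := by
        rw [← ih]
        field_simp
        linarith [hmain]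
      rw [show n + 1 + 2 = n + 3 from rfl, hstep, Nat.factorial_succ (n + 1)]
      have hfne : ((Nat.factorial (n + 1) : ℝ)) ≠ 0 := Nat.cast_ne_zero.mpr (Nat.factorial_ne_zero _)
      push_cast
      field_simp
      ring
  ext n
  have expand : (1 - PowerSeries.X : PowerSeries ℝ) ^ 2 * PowerSeries.mk e
      = PowerSeries.mk e - (PowerSeries.C 2) * (PowerSeries.X * PowerSeries.mk e)
        + PowerSeries.X ^ 2 * PowerSeries.mk e := by
    have : (PowerSeries.C (2 : ℝ)) = 2 := by rw [map_ofNat]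
    rw [this]; ring
  rw [expand]
  match n with
  | 0 =>
    simp [h0]
  | 1 =>
    simp only [map_add, map_sub, PowerSeries.coeff_C_mul, PowerSeries.coeff_succ_X_mul,
      PowerSeries.coeff_mk, PowerSeries.coeff_X_pow_mul']
    norm_num [h0, h1]
  | (n + 2) =>
    have hX2 : (PowerSeries.coeff (n + 2)) (PowerSeries.X ^ 2 * PowerSeries.mk e) = e n := by
      simpa using PowerSeries.coeff_X_pow_mul (PowerSeries.mk e) 2 n
    simp only [map_add, map_sub, PowerSeries.coeff_C_mul, PowerSeries.coeff_succ_X_mul,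
      PowerSeries.coeff_mk, hX2]
    have := key n
    push_cast at this ⊢
    linarith [this]
end

section
/- Let G be a graph on a vertex set V in which every vertex has degree at most d, and equip the space [0,1]^{E(G)} of edge-label configurations (τ_e)_{e ∈ E(G)} with the product of uniform probability measures on [0,1]. Fix an edge e of G. Then almost surely there exists a finite r such that every monotone path in G whose first edge is e has length at most r; that is, almost surely there are only finitely many monotone paths starting with e, and they are all contained in the ball B_r(e) of radius r around e. -/
open MeasureTheory ProbabilityTheory
open scoped ENNReal


-- walk counting lemma
lemma walk_finset {V : Type*} (G : SimpleGraph V) [G.LocallyFinite] (d : ℕ)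
    (hdeg : ∀ v : V, G.degree v ≤ d) :
    ∀ (n : ℕ) (u : V), ∃ s : Finset (Σ v : V, G.Walk u v), s.card ≤ d ^ n ∧
      ∀ (v : V) (w : G.Walk u v), w.length = n → (⟨v, w⟩ : Σ v : V, G.Walk u v) ∈ s := by
  classical
  intro n
  induction n with
  | zero =>
    intro u
    refine ⟨{⟨u, .nil⟩}, by simp, ?_⟩
    intro v w h
    cases w with
    | nil => simp
    | cons h' p => simp at h
  | succ n ih =>
    intro u
    choose S hcard hmem using ih
    refine ⟨(G.neighborFinset u).attach.biUnion (fun a =>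
      (S a.1).image (fun p => ⟨p.1, SimpleGraph.Walk.cons ((G.mem_neighborFinset u a.1).mp a.2) p.2⟩)), ?_, ?_⟩
    · refine le_trans (Finset.card_biUnion_le) ?_
      calc ∑ a ∈ (G.neighborFinset u).attach, ((S a.1).image _).card
          ≤ ∑ a ∈ (G.neighborFinset u).attach, d ^ n := by
            refine Finset.sum_le_sum fun a _ => le_trans (Finset.card_image_le) (hcard a.1)
        _ = (G.degree u) * d ^ n := by
            rw [Finset.sum_const, Finset.card_attach, smul_eq_mul, SimpleGraph.card_neighborFinset_eq_degree]
        _ ≤ d * d ^ n := Nat.mul_le_mul_right _ (hdeg u)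
        _ = d ^ (n + 1) := by ring
    · intro v w h
      cases w with
      | nil => simp at h
      | cons hadj p =>
        rename_i b
        refine Finset.mem_biUnion.mpr ⟨⟨b, (G.mem_neighborFinset u b).mpr hadj⟩,
          Finset.mem_attach _ _, Finset.mem_image.mpr ⟨⟨v, p⟩, hmem b v p (by simpa using h), rfl⟩⟩


lemma walk_take {V : Type*} {G : SimpleGraph V} :
    ∀ {u v : V} (w : G.Walk u v) (n : ℕ), n ≤ w.length →
      ∃ (v' : V) (w' : G.Walk u v'), w'.darts = w.darts.take n ∧ w'.length = n := by
  intro u v w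
  induction w with
  | nil => intro n hn; simp at hn; exact ⟨_, .nil, by simp [hn], by simp [hn]⟩
  | cons hadj p ih =>
    intro n hn
    cases n with
    | zero => exact ⟨_, .nil, by simp, by simp⟩
    | succ n =>
      obtain ⟨v', w', hd, hl⟩ := ih n (by simpa using hn)
      exact ⟨v', .cons hadj w', by simp [hd], by simp [hl]⟩

lemma start_mem_of_head {V : Type*} {G : SimpleGraph V} {u v : V} (w : G.Walk u v)
    {s : Sym2 V} (h : w.edges.head? = some s) : u ∈ s := by
  cases w with
  | nil => simp [SimpleGraph.Walk.edges] at h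
  | cons hadj p =>
    simp [SimpleGraph.Walk.edges] at h
    rw [← h]
    exact Sym2.mem_mk_left _ _

lemma head?_take {α : Type*} (l : List α) (n : ℕ) : (l.take (n+1)).head? = l.head? := by
  cases l <;> simp


lemma order_region (m : Measure ℝ) [IsProbabilityMeasure m] (n : ℕ) :
    Measure.pi (fun _ : Fin n => m) {x | ∀ i j : Fin n, i < j → x j < x i}
      ≤ ((Nat.factorial n : ℝ≥0∞))⁻¹ := by
  set ν := Measure.pi (fun _ : Fin n => m) with hν
  set D : Equiv.Perm (Fin n) → Set (Fin n → ℝ) :=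
    fun σ => {x | ∀ i j : Fin n, i < j → x (σ j) < x (σ i)} with hD
  have hDmeas : ∀ σ, MeasurableSet (D σ) := by
    intro σ
    have : D σ = ⋂ (i : Fin n) (j : Fin n) (_ : i < j), {x : Fin n → ℝ | x (σ j) < x (σ i)} := by
      ext x; simp [hD]
    rw [this]
    exact MeasurableSet.iInter fun i => MeasurableSet.iInter fun j =>
      MeasurableSet.iInter fun _ =>
        measurableSet_lt (measurable_pi_apply _) (measurable_pi_apply _)
  have hpre : ∀ σ : Equiv.Perm (Fin n),
      D σ = (MeasurableEquiv.piCongrLeft (fun _ : Fin n => ℝ) σ.symm) ⁻¹' (D 1) := by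
    intro σ
    ext x
    have happ : ∀ i : Fin n,
        (MeasurableEquiv.piCongrLeft (fun _ : Fin n => ℝ) σ.symm) x i = x (σ i) := by
      intro i
      have := MeasurableEquiv.piCongrLeft_apply_apply (σ.symm) (β := fun _ : Fin n => ℝ) x (σ i)
      simpa using this
    simp [hD, Set.mem_preimage, happ]
  have hmp : ∀ σ : Equiv.Perm (Fin n), ν (D σ) = ν (D 1) := by
    intro σ
    have hT := measurePreserving_piCongrLeft (fun _ : Fin n => m) σ.symm
    rw [hpre σ]
    exact hT.measure_preimage (hDmeas 1).nullMeasurableSet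
  have hdisj : Pairwise (Function.onFun Disjoint D) := by
    intro σ σ' hne
    rw [Function.onFun, Set.disjoint_left]
    intro x hx hx'
    apply hne
    have h1 : StrictAnti (fun i => x (σ i)) := fun i j hij => hx i j hij
    have h2 : StrictAnti (fun i => x (σ' i)) := fun i j hij => hx' i j hij
    set π : Equiv.Perm (Fin n) := σ'.trans σ.symm with hπ
    have hπmono : StrictMono (π : Fin n → Fin n) := by
      intro i j hij
      have : x (σ (π j)) < x (σ (π i)) := by
        simpa [hπ] using h2 hij
      exact (h1.lt_iff_gt).mp this
    have heq : (StrictMono.orderIsoOfSurjective (π : Fin n → Fin n) hπmono π.surjective)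
        = OrderIso.refl (Fin n) := Subsingleton.elim _ _
    have hπid : ∀ i, π i = i := by
      intro i
      have := congrArg (fun f : Fin n ≃o Fin n => f i) heq
      simpa using this
    refine Equiv.ext fun i => ?_
    have h3 := hπid i
    simp only [hπ, Equiv.trans_apply] at h3
    exact ((Equiv.symm_apply_eq σ).mp h3).symm
  have hunion : ν (⋃ σ : Equiv.Perm (Fin n), D σ) = ∑' σ : Equiv.Perm (Fin n), ν (D σ) :=
    measure_iUnion hdisj hDmeas
  have hsum : ∑' σ : Equiv.Perm (Fin n), ν (D σ) = (Nat.factorial n : ℝ≥0∞) * ν (D 1) := by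
    rw [tsum_eq_sum (s := Finset.univ) (by simp)]
    rw [Finset.sum_congr rfl (fun σ _ => hmp σ), Finset.sum_const]
    simp [Fintype.card_perm]
  have hle1 : (Nat.factorial n : ℝ≥0∞) * ν (D 1) ≤ 1 := by
    rw [← hsum, ← hunion]
    exact le_trans (measure_mono (Set.subset_univ _)) (by simp)
  have hD1 : ν (D 1) ≤ (Nat.factorial n : ℝ≥0∞)⁻¹ := by
    rw [ENNReal.le_inv_iff_mul_le, mul_comm]
    exact hle1
  have : {x : Fin n → ℝ | ∀ i j : Fin n, i < j → x j < x i} = D 1 := by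
    ext x; simp [hD]
  rw [this]
  exact hD1


lemma list_mono_measure {E : Type*} (μ : Measure (E → ℝ)) [IsProbabilityMeasure μ]
    (hindep : iIndepFun (fun (ε : E) (τ : E → ℝ) => τ ε) μ)
    (hunif : ∀ ε : E, μ.map (fun τ => τ ε) = volume.restrict (Set.Icc (0 : ℝ) 1))
    (l : List E) :
    μ {τ : E → ℝ | List.Pairwise (fun a b => b < a) (l.map τ)}
      ≤ ((Nat.factorial l.length : ℝ≥0∞))⁻¹ := by
  classical
  haveI : IsProbabilityMeasure (volume.restrict (Set.Icc (0 : ℝ) 1)) := by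
    constructor
    simp [Real.volume_Icc]
  by_cases hnd : l.Nodup
  · set g : Fin l.length → E := l.get with hgdef
    have hg : Function.Injective g := List.nodup_iff_injective_get.mp hnd
    set Φ : (E → ℝ) → (Fin l.length → ℝ) := fun τ i => τ (g i) with hΦdef
    have hΦ : Measurable Φ := measurable_pi_lambda _ (fun i => measurable_pi_apply _)
    have hDmeas : MeasurableSet {x : Fin l.length → ℝ | ∀ i j : Fin l.length, i < j → x j < x i} := by
      have : {x : Fin l.length → ℝ | ∀ i j : Fin l.length, i < j → x j < x i}
          = ⋂ (i : Fin l.length) (j : Fin l.length) (_ : i < j), {x : Fin l.length → ℝ | x j < x i} := by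
        ext x; simp
      rw [this]
      exact MeasurableSet.iInter fun i => MeasurableSet.iInter fun j =>
        MeasurableSet.iInter fun _ =>
          measurableSet_lt (measurable_pi_apply _) (measurable_pi_apply _)
    have hset : {τ : E → ℝ | List.Pairwise (fun a b => b < a) (l.map τ)}
        = Φ ⁻¹' {x : Fin l.length → ℝ | ∀ i j : Fin l.length, i < j → x j < x i} := by
      ext τ
      simp only [Set.mem_setOf_eq, Set.mem_preimage]
      constructor
      · intro h i j hij
        have := (List.pairwise_iff_getElem.mp h) i j (by simp [i.isLt]) (by simp [j.isLt])
          (by exact_mod_cast hij)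
        simpa [hΦdef, hgdef] using this
      · intro h
        rw [List.pairwise_iff_getElem]
        intro i j hi hj hij
        have := h ⟨i, by simpa using hi⟩ ⟨j, by simpa using hj⟩ (by simpa using hij)
        simpa [hΦdef, hgdef] using this
    have hlaw : μ.map Φ
        = Measure.pi (fun _ : Fin l.length => volume.restrict (Set.Icc (0 : ℝ) 1)) := by
      refine (Measure.pi_eq fun s hs => ?_).symm
      rw [Measure.map_apply hΦ (MeasurableSet.univ_pi hs)]
      have hpre : Φ ⁻¹' (Set.pi Set.univ s) = ⋂ i, (fun τ : E → ℝ => τ (g i)) ⁻¹' s i := by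
        ext τ; simp [hΦdef, Set.mem_pi]
      rw [hpre]
      set t : E → Set ℝ := fun ε => if h : ∃ i, g i = ε then s (Classical.choose h) else Set.univ
        with ht
      have htmeas : ∀ ε, MeasurableSet (t ε) := by
        intro ε
        rw [ht]
        by_cases h : ∃ i, g i = ε
        · simp only [dif_pos h]; exact hs _
        · simp only [dif_neg h]; exact MeasurableSet.univ
      have htg : ∀ i, t (g i) = s i := by
        intro i
        have hex : ∃ j, g j = g i := ⟨i, rfl⟩
        have hch := Classical.choose_spec hex
        rw [ht]
        simp only [dif_pos hex]
        rw [hg hch]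
      have hiInter : ⋂ i, (fun τ : E → ℝ => τ (g i)) ⁻¹' s i
          = ⋂ ε ∈ Finset.image g Finset.univ, (fun τ : E → ℝ => τ ε) ⁻¹' t ε := by
        ext τ
        simp only [Set.mem_iInter, Finset.mem_image, Finset.mem_univ, true_and, Set.mem_preimage]
        constructor
        · rintro h ε ⟨i, rfl⟩
          rw [htg]
          exact h i
        · intro h i
          have := h (g i) ⟨i, rfl⟩
          rwa [htg] at this
      rw [hiInter]
      rw [hindep.meas_biInter (S := Finset.image g Finset.univ)
        (fun ε _ => ⟨t ε, htmeas ε, rfl⟩)]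
      rw [Finset.prod_image (fun i _ j _ h => hg h)]
      refine Finset.prod_congr rfl fun i _ => ?_
      rw [htg]
      rw [← hunif (g i), Measure.map_apply (measurable_pi_apply (g i)) (hs i)]
    rw [hset, ← Measure.map_apply hΦ hDmeas, hlaw]
    exact order_region _ _
  · have : {τ : E → ℝ | List.Pairwise (fun a b => b < a) (l.map τ)} = ∅ := by
      rw [Set.eq_empty_iff_forall_notMem]
      intro τ h
      simp only [Set.mem_setOf_eq] at h
      have hmapnd : (l.map τ).Nodup := h.imp ne_of_gt
      exact hnd (List.Nodup.of_map _ hmapnd)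
    rw [this]
    simp


theorem stmt_9 {V : Type*} (G : SimpleGraph V) [G.LocallyFinite] (d : ℕ)
    (hdeg : ∀ v : V, G.degree v ≤ d)
    (μ : Measure (G.edgeSet → ℝ)) [IsProbabilityMeasure μ]
    (hindep : iIndepFun
      (fun (ε : G.edgeSet) (τ : G.edgeSet → ℝ) => τ ε) μ)
    (hunif : ∀ ε : G.edgeSet,
      μ.map (fun τ => τ ε) = volume.restrict (Set.Icc (0 : ℝ) 1))
    (e : G.edgeSet) :
    μ {τ : G.edgeSet → ℝ | ∃ r : ℕ, ∀ (u v : V) (w : G.Walk u v),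
        w.edges.head? = some (e : Sym2 V) →
        List.Pairwise (fun a b => b < a)
          (w.darts.map (fun δ => τ ⟨δ.edge, δ.edge_mem⟩)) →
        w.length ≤ r} = 1 := by
  classical
  set T := {τ : G.edgeSet → ℝ | ∃ r : ℕ, ∀ (u v : V) (w : G.Walk u v),
        w.edges.head? = some (e : Sym2 V) →
        List.Pairwise (fun a b => b < a)
          (w.darts.map (fun δ => τ ⟨δ.edge, δ.edge_mem⟩)) →
        w.length ≤ r} with hT
  obtain ⟨⟨x, y⟩, hxy⟩ := Quot.exists_rep (e : Sym2 V)
  have hxy : (e : Sym2 V) = s(x, y) := hxy.symm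
  -- the per-walk monotone event
  have key : ∀ n : ℕ, (1 : ℝ≥0∞)
      ≤ μ T + 2 * (d : ℝ≥0∞) ^ (n + 1) * ((Nat.factorial (n + 1) : ℝ≥0∞))⁻¹ := by
    intro n
    obtain ⟨sx0, hsxcard, hsxmem⟩ := walk_finset G d hdeg (n + 1) x
    obtain ⟨sy0, hsycard, hsymem⟩ := walk_finset G d hdeg (n + 1) y
    set sx := sx0.filter (fun p => p.2.length = n + 1) with hsx
    set sy := sy0.filter (fun p => p.2.length = n + 1) with hsy
    set Mx : (Σ v : V, G.Walk x v) → Set (G.edgeSet → ℝ) := fun p =>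
      {τ | List.Pairwise (fun a b => b < a)
        (p.2.darts.map (fun δ => τ ⟨δ.edge, δ.edge_mem⟩))} with hMx
    set My : (Σ v : V, G.Walk y v) → Set (G.edgeSet → ℝ) := fun p =>
      {τ | List.Pairwise (fun a b => b < a)
        (p.2.darts.map (fun δ => τ ⟨δ.edge, δ.edge_mem⟩))} with hMy
    -- covering
    have hcover : (Set.univ : Set (G.edgeSet → ℝ))
        ⊆ T ∪ ((⋃ p ∈ sx, Mx p) ∪ (⋃ p ∈ sy, My p)) := by
      intro τ _
      by_cases hU : τ ∈ (⋃ p ∈ sx, Mx p) ∪ (⋃ p ∈ sy, My p)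
      · exact Or.inr hU
      · left
        rw [Set.mem_union] at hU
        push_neg at hU
        obtain ⟨hUx, hUy⟩ := hU
        refine ⟨n, fun u v w hhead hmono => ?_⟩
        by_contra hlen
        push_neg at hlen
        obtain ⟨v', w', hdarts, hlen'⟩ := walk_take w (n + 1) hlen
        have hmono' : List.Pairwise (fun a b => b < a)
            (w'.darts.map (fun δ => τ ⟨δ.edge, δ.edge_mem⟩)) := by
          rw [hdarts, List.map_take]
          exact hmono.sublist (List.take_sublist _ _)
        have hedges : w'.edges = w.edges.take (n + 1) := by
          show w'.darts.map SimpleGraph.Dart.edge = (w.darts.map SimpleGraph.Dart.edge).take (n + 1)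
          rw [hdarts, List.map_take]
        have hhead' : w'.edges.head? = some (e : Sym2 V) := by
          rw [hedges, head?_take, hhead]
        have hu : u ∈ (e : Sym2 V) := start_mem_of_head w hhead
        rw [hxy, Sym2.mem_iff] at hu
        rcases hu with rfl | rfl
        · exact hUx (Set.mem_biUnion
            (Finset.mem_filter.mpr ⟨hsxmem v' w' hlen', hlen'⟩) hmono')
        · exact hUy (Set.mem_biUnion
            (Finset.mem_filter.mpr ⟨hsymem v' w' hlen', hlen'⟩) hmono')
    -- per-walk bounds
    have hboundx : ∀ p ∈ sx, μ (Mx p) ≤ ((Nat.factorial (n + 1) : ℝ≥0∞))⁻¹ := by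
      intro p hp
      have hplen : p.2.length = n + 1 := (Finset.mem_filter.mp hp).2
      have hrw : Mx p = {τ : G.edgeSet → ℝ | List.Pairwise (fun a b => b < a)
          ((p.2.darts.map (fun δ => (⟨δ.edge, δ.edge_mem⟩ : G.edgeSet))).map τ)} := by
        ext τ
        simp only [hMx, Set.mem_setOf_eq, List.map_map]
        rfl
      have := list_mono_measure μ hindep hunif
        (p.2.darts.map (fun δ => (⟨δ.edge, δ.edge_mem⟩ : G.edgeSet)))
      rw [hrw]
      refine le_trans this (le_of_eq ?_)
      congr 1
      rw [List.length_map, SimpleGraph.Walk.length_darts, hplen]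
    have hboundy : ∀ p ∈ sy, μ (My p) ≤ ((Nat.factorial (n + 1) : ℝ≥0∞))⁻¹ := by
      intro p hp
      have hplen : p.2.length = n + 1 := (Finset.mem_filter.mp hp).2
      have hrw : My p = {τ : G.edgeSet → ℝ | List.Pairwise (fun a b => b < a)
          ((p.2.darts.map (fun δ => (⟨δ.edge, δ.edge_mem⟩ : G.edgeSet))).map τ)} := by
        ext τ
        simp only [hMy, Set.mem_setOf_eq, List.map_map]
        rfl
      have := list_mono_measure μ hindep hunif
        (p.2.darts.map (fun δ => (⟨δ.edge, δ.edge_mem⟩ : G.edgeSet)))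
      rw [hrw]
      refine le_trans this (le_of_eq ?_)
      congr 1
      rw [List.length_map, SimpleGraph.Walk.length_darts, hplen]
    have hA : μ (⋃ p ∈ sx, Mx p) ≤ (d : ℝ≥0∞) ^ (n + 1) * ((Nat.factorial (n + 1) : ℝ≥0∞))⁻¹ := by
      refine le_trans (measure_biUnion_finset_le _ _) ?_
      calc ∑ p ∈ sx, μ (Mx p) ≤ ∑ _p ∈ sx, ((Nat.factorial (n + 1) : ℝ≥0∞))⁻¹ :=
            Finset.sum_le_sum hboundx
        _ = (sx.card : ℝ≥0∞) * ((Nat.factorial (n + 1) : ℝ≥0∞))⁻¹ := by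
            rw [Finset.sum_const, nsmul_eq_mul]
        _ ≤ (d : ℝ≥0∞) ^ (n + 1) * ((Nat.factorial (n + 1) : ℝ≥0∞))⁻¹ := by
            refine mul_le_mul_left ?_ _
            have : sx.card ≤ d ^ (n + 1) :=
              le_trans (Finset.card_filter_le _ _) hsxcard
            exact_mod_cast Nat.cast_le.mpr this
    have hB : μ (⋃ p ∈ sy, My p) ≤ (d : ℝ≥0∞) ^ (n + 1) * ((Nat.factorial (n + 1) : ℝ≥0∞))⁻¹ := by
      refine le_trans (measure_biUnion_finset_le _ _) ?_
      calc ∑ p ∈ sy, μ (My p) ≤ ∑ _p ∈ sy, ((Nat.factorial (n + 1) : ℝ≥0∞))⁻¹ :=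
            Finset.sum_le_sum hboundy
        _ = (sy.card : ℝ≥0∞) * ((Nat.factorial (n + 1) : ℝ≥0∞))⁻¹ := by
            rw [Finset.sum_const, nsmul_eq_mul]
        _ ≤ (d : ℝ≥0∞) ^ (n + 1) * ((Nat.factorial (n + 1) : ℝ≥0∞))⁻¹ := by
            refine mul_le_mul_left ?_ _
            have : sy.card ≤ d ^ (n + 1) :=
              le_trans (Finset.card_filter_le _ _) hsycard
            exact_mod_cast Nat.cast_le.mpr this
    calc (1 : ℝ≥0∞) = μ Set.univ := (measure_univ).symm
      _ ≤ μ (T ∪ ((⋃ p ∈ sx, Mx p) ∪ (⋃ p ∈ sy, My p))) := measure_mono hcover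
      _ ≤ μ T + μ ((⋃ p ∈ sx, Mx p) ∪ (⋃ p ∈ sy, My p)) := measure_union_le _ _
      _ ≤ μ T + (μ (⋃ p ∈ sx, Mx p) + μ (⋃ p ∈ sy, My p)) :=
          add_le_add_right (measure_union_le _ _) _
      _ ≤ μ T + ((d : ℝ≥0∞) ^ (n + 1) * ((Nat.factorial (n + 1) : ℝ≥0∞))⁻¹
            + (d : ℝ≥0∞) ^ (n + 1) * ((Nat.factorial (n + 1) : ℝ≥0∞))⁻¹) :=
          add_le_add_right (add_le_add hA hB) _
      _ = μ T + 2 * (d : ℝ≥0∞) ^ (n + 1) * ((Nat.factorial (n + 1) : ℝ≥0∞))⁻¹ := by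
          ring
  -- the error term tends to zero
  have hc : Filter.Tendsto
      (fun k : ℕ => 2 * (d : ℝ≥0∞) ^ k * ((Nat.factorial k : ℝ≥0∞))⁻¹)
      Filter.atTop (nhds 0) := by
    have hr : Filter.Tendsto (fun k : ℕ => (2 : ℝ) * (d : ℝ) ^ k / (Nat.factorial k : ℝ))
        Filter.atTop (nhds 0) := by
      have := FloorSemiring.tendsto_mul_pow_div_factorial_sub_atTop (2 : ℝ) (d : ℝ) 0
      simpa using this
    have heq : (fun k : ℕ => 2 * (d : ℝ≥0∞) ^ k * ((Nat.factorial k : ℝ≥0∞))⁻¹)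
        = fun k : ℕ => ENNReal.ofReal ((2 : ℝ) * (d : ℝ) ^ k / (Nat.factorial k : ℝ)) := by
      funext k
      rw [ENNReal.ofReal_div_of_pos (by positivity), div_eq_mul_inv]
      rw [ENNReal.ofReal_mul (by norm_num)]
      rw [ENNReal.ofReal_pow (by positivity)]
      rw [ENNReal.ofReal_natCast, ENNReal.ofReal_natCast]
      norm_num
    rw [heq]
    have : ENNReal.ofReal 0 = 0 := by simp
    rw [← this]
    exact (ENNReal.continuous_ofReal.tendsto 0).comp hr
  have hc' : Filter.Tendsto
      (fun n : ℕ => μ T + 2 * (d : ℝ≥0∞) ^ (n + 1) * ((Nat.factorial (n + 1) : ℝ≥0∞))⁻¹)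
      Filter.atTop (nhds (μ T + 0)) := by
    refine Filter.Tendsto.const_add _ ?_
    exact hc.comp (Filter.tendsto_add_atTop_nat 1)
  have h1 : (1 : ℝ≥0∞) ≤ μ T + 0 := ge_of_tendsto' hc' key
  rw [add_zero] at h1
  exact le_antisymm prob_le_one h1
end
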